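/- Every finite undirected graph admits a good orientation, i.e., an orientation of its edges such that every vertex of degree at least 2 has at least one outgoing edge and at least one incoming edge. -/

import Mathlib

open SimpleGraph

section Aux

variable {V : Type*} [Fintype V] [DecidableEq V]

/-- If no dart of `W` ends at `v`, then any dart starting at `v` forces `v` to be
the start of `W`. -/
lemma GoodOrient.fst_eq_start {G : SimpleGraph V} {v : V} :
    ∀ {a b : V} (W : G.Walk a b), (∀ d ∈ W.darts, d.snd ≠ v) →
      ∀ d ∈ W.darts, d.fst = v → v = a := by
  intro a b W
  induction W with
  | nil => intro _ d hd; simp at hd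
  | @cons u x w h p ih =>
    intro hyp d hd hfst
    rw [Walk.darts_cons, List.mem_cons] at hd
    rcases hd with rfl | hd
    · exact hfst.symm
    · have hx : v = x :=
        ih (fun d' hd' => hyp d' (by rw [Walk.darts_cons]; exact List.mem_cons_of_mem _ hd'))
          d hd hfst
      exact absurd hx.symm
        (hyp ⟨(u, x), h⟩ (by rw [Walk.darts_cons]; exact List.mem_cons_self))

/-- If no dart of `W` ends at `v`, then there is at most one dart of `W` starting at `v`. -/
lemma GoodOrient.fst_unique {G : SimpleGraph V} {v : V} :
    ∀ {a b : V} (W : G.Walk a b), (∀ d ∈ W.darts, d.snd ≠ v) →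
      ∀ d₁ ∈ W.darts, d₁.fst = v → ∀ d₂ ∈ W.darts, d₂.fst = v → d₁ = d₂ := by
  intro a b W
  induction W with
  | nil => intro _ d hd; simp at hd
  | @cons u x w h p ih =>
    intro hyp d₁ hd₁ hfst₁ d₂ hd₂ hfst₂
    have hyp' : ∀ d' ∈ p.darts, d'.snd ≠ v := fun d' hd' =>
      hyp d' (by rw [Walk.darts_cons]; exact List.mem_cons_of_mem _ hd')
    have hhead : ∀ d ∈ p.darts, d.fst ≠ v := by
      intro d hd hfst
      have hx : v = x := GoodOrient.fst_eq_start p hyp' d hd hfst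
      exact hyp ⟨(u, x), h⟩ (by rw [Walk.darts_cons]; exact List.mem_cons_self) hx.symm
    rw [Walk.darts_cons, List.mem_cons] at hd₁ hd₂
    rcases hd₁ with rfl | hd₁
    · rcases hd₂ with rfl | hd₂
      · rfl
      · exact absurd hfst₂ (hhead d₂ hd₂)
    · exact absurd hfst₁ (hhead d₁ hd₁)

/-- Key lemma: a maximum-length trail passes *into* every vertex of degree ≥ 2 it touches. -/
lemma GoodOrient.exists_dart_snd {G : SimpleGraph V} [DecidableRel G.Adj] {a b v : V}
    (W : G.Walk a b) (hW : W.IsTrail)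
    (hmax : ∀ (x y : V) (T : G.Walk x y), T.IsTrail → T.length ≤ W.length)
    (hv : 2 ≤ G.degree v) (he : ∃ e ∈ W.edges, v ∈ e) :
    ∃ d ∈ W.darts, d.snd = v := by
  by_contra hno
  push_neg at hno
  obtain ⟨e, heW, hve⟩ := he
  obtain ⟨d, hd, rfl⟩ := List.mem_map.mp heW
  have hfst : d.fst = v := by
    rcases Sym2.mem_iff.mp hve with h1 | h1
    · exact h1.symm
    · exact absurd h1.symm (hno d hd)
  have hva : v = a := GoodOrient.fst_eq_start W hno d hd hfst
  subst hva
  -- every edge at `v` belongs to `W`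
  have hall : ∀ w : V, G.Adj v w → s(v, w) ∈ W.edges := by
    intro w hw
    by_contra hne
    have hT : (Walk.cons hw.symm W).IsTrail := by
      rw [Walk.isTrail_cons]
      refine ⟨hW, ?_⟩
      rwa [Sym2.eq_swap]
    have := hmax _ _ (Walk.cons hw.symm W) hT
    simp [Walk.length_cons] at this
  -- two distinct neighbors of `v`
  obtain ⟨w₁, hw₁, w₂, hw₂, hne⟩ := Finset.one_lt_card.mp (lt_of_lt_of_le one_lt_two hv)
  rw [mem_neighborFinset] at hw₁ hw₂
  have he₁ := hall w₁ hw₁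
  have he₂ := hall w₂ hw₂
  obtain ⟨d₁, hd₁, hde₁⟩ := List.mem_map.mp he₁
  obtain ⟨d₂, hd₂, hde₂⟩ := List.mem_map.mp he₂
  have hfst₁ : d₁.fst = v := by
    have hvmem : v ∈ d₁.edge := by rw [hde₁]; exact Sym2.mem_mk_left _ _
    rcases Sym2.mem_iff.mp hvmem with h1 | h1
    · exact h1.symm
    · exact absurd h1.symm (hno d₁ hd₁)
  have hfst₂ : d₂.fst = v := by
    have hvmem : v ∈ d₂.edge := by rw [hde₂]; exact Sym2.mem_mk_left _ _
    rcases Sym2.mem_iff.mp hvmem with h1 | h1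
    · exact h1.symm
    · exact absurd h1.symm (hno d₂ hd₂)
  have : d₁ = d₂ := GoodOrient.fst_unique W hno d₁ hd₁ hfst₁ d₂ hd₂ hfst₂
  apply hne
  have : d₁.edge = d₂.edge := by rw [this]
  rw [hde₁, hde₂] at this
  rcases Sym2.eq_iff.mp this with ⟨_, h⟩ | ⟨h1, h2⟩
  · exact h
  · exact h2.trans h1

/-- Both directions: a maximum-length trail passes into and out of every
vertex of degree ≥ 2 that it touches. -/
lemma GoodOrient.exists_darts {G : SimpleGraph V} [DecidableRel G.Adj] {a b v : V}
    (W : G.Walk a b) (hW : W.IsTrail)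
    (hmax : ∀ (x y : V) (T : G.Walk x y), T.IsTrail → T.length ≤ W.length)
    (hv : 2 ≤ G.degree v) (he : ∃ e ∈ W.edges, v ∈ e) :
    (∃ d ∈ W.darts, d.fst = v) ∧ (∃ d ∈ W.darts, d.snd = v) := by
  refine ⟨?_, GoodOrient.exists_dart_snd W hW hmax hv he⟩
  have hmax' : ∀ (x y : V) (T : G.Walk x y), T.IsTrail → T.length ≤ W.reverse.length := by
    intro x y T hT
    rw [Walk.length_reverse]
    exact hmax x y T hT
  have he' : ∃ e ∈ W.reverse.edges, v ∈ e := by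
    obtain ⟨e, heW, hve⟩ := he
    exact ⟨e, by rw [Walk.edges_reverse]; exact List.mem_reverse.mpr heW, hve⟩
  obtain ⟨d, hd, hsnd⟩ :=
    GoodOrient.exists_dart_snd W.reverse (hW.reverse) hmax' hv he'
  refine ⟨d.symm, Walk.mem_darts_reverse.mp hd, ?_⟩
  simpa using hsnd

/-- The main induction. -/
lemma GoodOrient.main : ∀ (n : ℕ) (G : SimpleGraph V) (inst : DecidableRel G.Adj),
    G.edgeFinset.card ≤ n →
    ∃ o : Sym2 V → V × V,
      (∀ e ∈ G.edgeSet, e = s((o e).1, (o e).2)) ∧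
      (∀ v : V, 2 ≤ G.degree v →
        (∃ e ∈ G.edgeSet, (o e).1 = v) ∧ (∃ e ∈ G.edgeSet, (o e).2 = v)) := by
  intro n
  induction n with
  | zero =>
    intro G inst hcard
    refine ⟨fun e => Quot.out e, ?_, ?_⟩
    · intro e he
      exfalso
      have : e ∈ G.edgeFinset := mem_edgeFinset.mpr he
      simp [Finset.card_eq_zero.mp (Nat.le_zero.mp hcard)] at this
    · intro v hv
      exfalso
      obtain ⟨w, hw⟩ := (G.degree_pos_iff_exists_adj v).mp (lt_of_lt_of_le two_pos hv)
      have : s(v, w) ∈ G.edgeFinset := mem_edgeFinset.mpr hw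
      simp [Finset.card_eq_zero.mp (Nat.le_zero.mp hcard)] at this
  | succ n ih =>
    intro G inst hcard
    classical
    by_cases h0 : G.edgeFinset.card = 0
    · exact ih G inst (by omega)
    -- there is an edge, hence a nonempty trail
    have hedge : ∃ u w : V, G.Adj u w := by
      obtain ⟨e, he⟩ := Finset.card_pos.mp (Nat.pos_of_ne_zero h0)
      induction e using Sym2.ind with
      | _ u w => exact ⟨u, w, mem_edgeFinset.mp he⟩
    obtain ⟨u₀, w₀, h₀⟩ := hedge
    set S : Set ℕ := {m | ∃ (x y : V) (T : G.Walk x y), T.IsTrail ∧ T.length = m} with hS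
    have hSne : S.Nonempty := ⟨0, u₀, u₀, Walk.nil, Walk.IsTrail.nil, rfl⟩
    have hSbdd : BddAbove S := by
      refine ⟨G.edgeFinset.card, ?_⟩
      rintro m ⟨x, y, T, hT, rfl⟩
      calc T.length = T.edges.length := (Walk.length_edges T).symm
        _ = T.edges.toFinset.card := (List.toFinset_card_of_nodup hT.edges_nodup).symm
        _ ≤ G.edgeFinset.card := by
            apply Finset.card_le_card
            intro e hee
            rw [List.mem_toFinset] at hee
            exact mem_edgeFinset.mpr (T.edges_subset_edgeSet hee)
    obtain ⟨x, y, W, hW, hlen⟩ := Nat.sSup_mem hSne hSbdd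
    have hmax : ∀ (p q : V) (T : G.Walk p q), T.IsTrail → T.length ≤ W.length := by
      intro p q T hT
      rw [hlen]
      exact le_csSup hSbdd ⟨p, q, T, hT, rfl⟩
    have hW1 : 1 ≤ W.length := by
      rw [hlen]
      exact le_csSup hSbdd ⟨u₀, w₀, Walk.cons h₀ Walk.nil, by
        rw [Walk.isTrail_cons]; exact ⟨Walk.IsTrail.nil, by simp⟩, rfl⟩
    -- the graph with the edges of W removed
    set G' : SimpleGraph V := G.deleteEdges {e | e ∈ W.edges} with hG'
    haveI inst' : DecidableRel G'.Adj := fun p q =>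
      decidable_of_iff (G.Adj p q ∧ s(p, q) ∉ W.edges) (by rw [hG', deleteEdges_adj]; rfl)
    have hG'edge : G'.edgeSet = G.edgeSet \ {e | e ∈ W.edges} := by
      rw [hG']; exact edgeSet_deleteEdges _
    have hcard' : G'.edgeFinset.card ≤ n := by
      have hsub : G'.edgeFinset ⊂ G.edgeFinset := by
        rw [Finset.ssubset_iff_of_subset]
        · have hne : W.edges ≠ [] := by
            intro h
            have h2 := W.length_edges
            rw [h] at h2
            simp at h2
            omega
          obtain ⟨e₀, he₀⟩ := List.exists_mem_of_ne_nil _ hne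
          refine ⟨e₀, mem_edgeFinset.mpr (W.edges_subset_edgeSet he₀), ?_⟩
          rw [mem_edgeFinset, hG'edge]
          intro h
          exact h.2 he₀
        · intro e he
          rw [mem_edgeFinset] at he ⊢
          rw [hG'edge] at he
          exact he.1
      have := Finset.card_lt_card hsub
      omega
    obtain ⟨o', ho'1, ho'2⟩ := ih G' inst' hcard'
    -- orientation: along W on W's edges, o' elsewhere
    set o : Sym2 V → V × V := fun e =>
      if h : ∃ d, d ∈ W.darts ∧ d.edge = e then (h.choose.fst, h.choose.snd) else o' e with ho
    have hdartnodup : ∀ d₁ ∈ W.darts, ∀ d₂ ∈ W.darts, d₁.edge = d₂.edge → d₁ = d₂ :=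
      List.inj_on_of_nodup_map hW.edges_nodup
    have hofind : ∀ d ∈ W.darts, o d.edge = (d.fst, d.snd) := by
      intro d hd
      have hx : ∃ d', d' ∈ W.darts ∧ d'.edge = d.edge := ⟨d, hd, rfl⟩
      rw [ho]
      simp only [dif_pos hx]
      have := hdartnodup _ hx.choose_spec.1 _ hd hx.choose_spec.2
      rw [this]
    have honot : ∀ e, e ∉ W.edges → o e = o' e := by
      intro e he
      have hx : ¬ ∃ d, d ∈ W.darts ∧ d.edge = e := by
        rintro ⟨d, hd, rfl⟩
        exact he (List.mem_map_of_mem hd)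
      rw [ho]
      simp only [dif_neg hx]
    refine ⟨o, ?_, ?_⟩
    · intro e he
      by_cases hmem : e ∈ W.edges
      · obtain ⟨d, hd, rfl⟩ := List.mem_map.mp hmem
        rw [hofind d hd]
        rfl
      · rw [honot e hmem]
        exact ho'1 e (by rw [hG'edge]; exact ⟨he, hmem⟩)
    · intro v hv
      by_cases htouch : ∃ e ∈ W.edges, v ∈ e
      · obtain ⟨⟨dout, hdout, hfst⟩, ⟨din, hdin, hsnd⟩⟩ :=
          GoodOrient.exists_darts W hW hmax hv htouch
        constructor
        · exact ⟨dout.edge, dout.edge_mem, by rw [hofind dout hdout]; exact hfst⟩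
        · exact ⟨din.edge, din.edge_mem, by rw [hofind din hdin]; exact hsnd⟩
      · push_neg at htouch
        have hdeg : 2 ≤ G'.degree v := by
          have hnb : G'.neighborFinset v = G.neighborFinset v := by
            ext w
            rw [mem_neighborFinset, mem_neighborFinset, hG', deleteEdges_adj]
            constructor
            · exact fun h => h.1
            · intro h
              refine ⟨h, fun hmem => ?_⟩
              exact htouch _ hmem (Sym2.mem_mk_left _ _)
          rw [SimpleGraph.degree, hnb]
          exact hv
        obtain ⟨⟨e₁, he₁, hoe₁⟩, ⟨e₂, he₂, hoe₂⟩⟩ := ho'2 v hdeg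
        have hsub : ∀ e, e ∈ G'.edgeSet → e ∈ G.edgeSet ∧ e ∉ W.edges := by
          intro e he
          rw [hG'edge] at he
          exact he
        constructor
        · exact ⟨e₁, (hsub e₁ he₁).1, by rw [honot e₁ (hsub e₁ he₁).2]; exact hoe₁⟩
        · exact ⟨e₂, (hsub e₂ he₂).1, by rw [honot e₂ (hsub e₂ he₂).2]; exact hoe₂⟩

end Aux

/-- Every finite undirected graph admits a *good* orientation: an assignment of a
direction (ordered pair of endpoints) to each edge such that every vertex of degree
at least 2 has at least one outgoing and at least one incoming edge. -/
theorem good_orientation_exists {V : Type*} [Fintype V] [DecidableEq V]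
    (G : SimpleGraph V) [DecidableRel G.Adj] :
    ∃ o : Sym2 V → V × V,
      (∀ e ∈ G.edgeSet, e = s((o e).1, (o e).2)) ∧
      (∀ v : V, 2 ≤ G.degree v →
        (∃ e ∈ G.edgeSet, (o e).1 = v) ∧ (∃ e ∈ G.edgeSet, (o e).2 = v)) := by
  exact GoodOrient.main G.edgeFinset.card G inferInstance le_rfl
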